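/- Let n ≥ 2 be even and let s ∈ {-1,1}^n (a vector in ℝ^n with all entries ±1). Then the sum of all vectors d ∈ {-1,1}^n satisfying dᵀs ≥ 0 equals C(n-1, n/2) · s, where C(·,·) denotes the binomial coefficient. -/
import Mathlib


/-- The ±1 vector in `ℝ^n` associated with a Boolean sign pattern. -/
def pmVec (n : ℕ) (ε : Fin n → Bool) : Fin n → ℝ := fun i => if ε i then 1 else -1

open Finset

/-- Number of `true` coordinates of a sign pattern. -/
def kOf {n : ℕ} (δ : Fin n → Bool) : ℕ := (univ.filter (fun j => δ j = true)).card

lemma pm_sum_eq (n : ℕ) (δ : Fin n → Bool) :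
    ∑ j, pmVec n δ j = 2 * (kOf δ : ℝ) - n := by
  have h : ∀ j : Fin n, pmVec n δ j = 2 * (if δ j = true then (1:ℝ) else 0) - 1 := by
    intro j; cases h : δ j <;> simp [pmVec, h] <;> norm_num
  rw [Finset.sum_congr rfl (fun j _ => h j), Finset.sum_sub_distrib, ← Finset.mul_sum,
    Finset.sum_boole]
  simp [kOf, Finset.card_univ]

lemma pm_cond (n : ℕ) (δ : Fin n → Bool) :
    (0 ≤ ∑ j, pmVec n δ j) ↔ n ≤ 2 * kOf δ := by
  rw [pm_sum_eq, sub_nonneg]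
  norm_cast

lemma filter_mem_set (n : ℕ) (S : Finset (Fin n)) :
    univ.filter (fun j => decide (j ∈ S) = true) = S := by
  ext j; simp

lemma count_fixed (n m : ℕ) (i : Fin n) (hm : 1 ≤ m) :
    (univ.filter (fun δ : Fin n → Bool => δ i = true ∧ kOf δ = m)).card
      = (n-1).choose (m-1) := by
  have hcard : (univ.erase i).card = n - 1 := by
    rw [Finset.card_erase_of_mem (mem_univ i), Finset.card_univ, Fintype.card_fin]
  rw [← hcard, ← Finset.card_powersetCard (m-1) (univ.erase i)]
  refine Finset.card_bij' (fun δ _ => (univ.filter (fun j => δ j = true)).erase i)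
    (fun T _ => fun j => decide (j ∈ insert i T)) ?_ ?_ ?_ ?_
  · intro δ hδ
    simp only [mem_filter, mem_univ, true_and] at hδ
    rw [Finset.mem_powersetCard]
    constructor
    · intro x hx
      rw [Finset.mem_erase] at hx ⊢
      exact ⟨hx.1, mem_univ x⟩
    · rw [Finset.card_erase_of_mem (by simp [hδ.1])]
      rw [show (univ.filter (fun j => δ j = true)).card = m from hδ.2]
  · intro T hT
    rw [Finset.mem_powersetCard] at hT
    have hiT : i ∉ T := fun h => (Finset.mem_erase.1 (hT.1 h)).1 rfl
    simp only [mem_filter, mem_univ, true_and]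
    refine ⟨by simp, ?_⟩
    show (univ.filter (fun j => decide (j ∈ insert i T) = true)).card = m
    rw [filter_mem_set, Finset.card_insert_of_notMem hiT, hT.2]
    omega
  · intro δ hδ
    simp only [mem_filter, mem_univ, true_and] at hδ
    funext j
    have hins : insert i ((univ.filter (fun j => δ j = true)).erase i)
        = univ.filter (fun j => δ j = true) :=
      Finset.insert_erase (by simp [hδ.1])
    show decide (j ∈ insert i ((univ.filter (fun j => δ j = true)).erase i)) = δ j
    rw [hins]
    simp
  · intro T hT
    rw [Finset.mem_powersetCard] at hT
    have hiT : i ∉ T := fun h => (Finset.mem_erase.1 (hT.1 h)).1 rfl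
    show ((univ.filter (fun j => decide (j ∈ insert i T) = true)).erase i) = T
    rw [filter_mem_set, Finset.erase_insert hiT]

lemma kOf_update_true (n : ℕ) (δ : Fin n → Bool) (i : Fin n) (h : δ i = false) :
    kOf (Function.update δ i true) = kOf δ + 1 := by
  unfold kOf
  have : univ.filter (fun j => Function.update δ i true j = true)
      = insert i (univ.filter (fun j => δ j = true)) := by
    ext j
    rcases eq_or_ne j i with hj | hj <;> simp [Function.update_apply, hj]
  rw [this, Finset.card_insert_of_notMem (by simp [h])]

lemma kOf_update_false (n : ℕ) (δ : Fin n → Bool) (i : Fin n) (h : δ i = true) :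
    kOf (Function.update δ i false) = kOf δ - 1 := by
  unfold kOf
  have : univ.filter (fun j => Function.update δ i false j = true)
      = (univ.filter (fun j => δ j = true)).erase i := by
    ext j
    rcases eq_or_ne j i with hj | hj <;> simp [Function.update_apply, hj]
  rw [this, Finset.card_erase_of_mem (by simp [h])]

lemma kOf_pos {n : ℕ} {δ : Fin n → Bool} {i : Fin n} (h : δ i = true) : 1 ≤ kOf δ := by
  have : i ∈ univ.filter (fun j => δ j = true) := by simp [h]
  have := Finset.card_pos.2 ⟨i, this⟩
  exact this

/-- The admissible set. -/
def Sset (n : ℕ) : Finset (Fin n → Bool) := univ.filter (fun δ => n ≤ 2 * kOf δ)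

lemma mem_Sset {n : ℕ} {δ : Fin n → Bool} : δ ∈ Sset n ↔ n ≤ 2 * kOf δ := by
  simp [Sset]

lemma key (n : ℕ) (hn : 2 ≤ n) (hne : Even n) (i : Fin n) :
    ∑ δ ∈ univ.filter (fun δ : Fin n → Bool => 0 ≤ ∑ j, pmVec n δ j), pmVec n δ i
      = ((n-1).choose (n/2) : ℝ) := by
  have hn2 : 2 * (n / 2) = n := by
    obtain ⟨m, rfl⟩ := hne; omega
  have hfilter : univ.filter (fun δ : Fin n → Bool => 0 ≤ ∑ j, pmVec n δ j)
      = Sset n := by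
    rw [Sset]; apply Finset.filter_congr; intro δ _; simp [pm_cond]
  rw [hfilter]
  have hsplit : ∑ δ ∈ Sset n, pmVec n δ i
      = (((Sset n).filter (fun δ => δ i = true)).card : ℝ)
        - (((Sset n).filter (fun δ => ¬ δ i = true)).card : ℝ) := by
    have h1 : ∀ δ ∈ Sset n, pmVec n δ i = if δ i = true then (1:ℝ) else -1 := by
      intro δ _; rfl
    rw [Finset.sum_congr rfl h1, Finset.sum_ite, Finset.sum_const, Finset.sum_const]
    simp [sub_eq_add_neg]
  have hB : ((Sset n).filter (fun δ => ¬ δ i = true)).card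
      = (univ.filter (fun δ : Fin n → Bool => δ i = true ∧ n + 2 ≤ 2 * kOf δ)).card := by
    refine Finset.card_bij' (fun δ _ => Function.update δ i true)
      (fun δ _ => Function.update δ i false) ?_ ?_ ?_ ?_
    · intro δ hδ
      simp only [mem_Sset, mem_filter, mem_univ, true_and] at hδ
      have hδi : δ i = false := by cases h : δ i <;> simp [h] at hδ ⊢
      have hknew := kOf_update_true n δ i hδi
      simp only [mem_filter, mem_univ, true_and]
      refine ⟨by simp, by omega⟩
    · intro δ hδ
      simp only [mem_filter, mem_univ, true_and] at hδ
      have hknew := kOf_update_false n δ i hδ.1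
      have hpos := kOf_pos hδ.1
      simp only [mem_Sset, mem_filter, mem_univ, true_and]
      refine ⟨by omega, by simp⟩
    · intro δ hδ
      simp only [mem_Sset, mem_filter, mem_univ, true_and] at hδ
      have hδi : δ i = false := by cases h : δ i <;> simp [h] at hδ ⊢
      show Function.update (Function.update δ i true) i false = δ
      rw [Function.update_idem, ← hδi, Function.update_eq_self]
    · intro δ hδ
      simp only [mem_filter, mem_univ, true_and] at hδ
      show Function.update (Function.update δ i false) i true = δ
      rw [Function.update_idem, ← hδ.1, Function.update_eq_self]
  have hsub : (univ.filter (fun δ : Fin n → Bool => δ i = true ∧ n + 2 ≤ 2 * kOf δ))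
      ⊆ (Sset n).filter (fun δ => δ i = true) := by
    intro δ hδ
    simp only [mem_filter, mem_univ, true_and] at hδ
    simp only [mem_Sset, mem_filter, mem_univ, true_and]
    exact ⟨by clear * - hδ; omega, hδ.1⟩
  have hdiff : ((Sset n).filter (fun δ => δ i = true))
        \ (univ.filter (fun δ : Fin n → Bool => δ i = true ∧ n + 2 ≤ 2 * kOf δ))
      = univ.filter (fun δ : Fin n → Bool => δ i = true ∧ kOf δ = n / 2) := by
    ext δ
    simp only [Finset.mem_sdiff, mem_Sset, mem_filter, mem_univ, true_and]
    constructor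
    · rintro ⟨⟨h1, h2⟩, h3⟩
      refine ⟨h2, ?_⟩
      have h4 : ¬ (n + 2 ≤ 2 * kOf δ) := fun hc => h3 ⟨h2, hc⟩
      clear * - h1 h4 hn2
      omega
    · rintro ⟨h1, h2⟩
      refine ⟨⟨?_, h1⟩, ?_⟩
      · clear * - h2 hn2; omega
      · rintro ⟨-, hc⟩
        clear * - h2 hc hn2; omega
  have hcount : (univ.filter (fun δ : Fin n → Bool => δ i = true ∧ kOf δ = n / 2)).card
      = (n-1).choose (n/2 - 1) := count_fixed n (n/2) i (by clear * - hn hn2; omega)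
  have hle : (univ.filter (fun δ : Fin n → Bool => δ i = true ∧ n + 2 ≤ 2 * kOf δ)).card
      ≤ ((Sset n).filter (fun δ => δ i = true)).card := Finset.card_le_card hsub
  have hcards := Finset.card_sdiff_of_subset hsub
  rw [hdiff, hcount] at hcards
  have hsymm : (n-1).choose (n/2 - 1) = (n-1).choose (n/2) := by
    have h1 : n / 2 - 1 ≤ n - 1 := by clear * - hn hn2; omega
    have h2 : (n - 1) - (n / 2 - 1) = n / 2 := by clear * - hn hn2; omega
    rw [← Nat.choose_symm h1, h2]
  rw [hsplit, hB, ← hsymm, hcards, Nat.cast_sub hle]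

theorem sum_signvectors_nonneg_side_even
    (n : ℕ) (hn : 2 ≤ n) (hne : Even n)
    (s : Fin n → ℝ) (hs : ∀ i, s i = 1 ∨ s i = -1) :
    (∑ ε ∈ Finset.univ.filter
        (fun ε : Fin n → Bool => 0 ≤ ∑ i, pmVec n ε i * s i),
      pmVec n ε) = ((n - 1).choose (n / 2) : ℝ) • s := by
  set mask : (Fin n → Bool) → (Fin n → Bool) :=
    fun δ => fun t => xor (δ t) (!(decide (s t = 1))) with hmaskdef
  have hmask : ∀ (δ : Fin n → Bool) (j : Fin n),
      pmVec n (mask δ) j = pmVec n δ j * s j := by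
    intro δ j
    rcases hs j with h | h
    · simp [hmaskdef, pmVec, h]
    · have hd : decide (s j = 1) = false := by
        rw [decide_eq_false_iff_not, h]; norm_num
      cases hδ : δ j <;> norm_num [hmaskdef, pmVec, h, hd, hδ]
  have hinv : ∀ δ : Fin n → Bool, mask (mask δ) = δ := by
    intro δ; funext t; simp [hmaskdef, Bool.xor_assoc]
  have hmask2 : ∀ (δ : Fin n → Bool) (j : Fin n),
      pmVec n δ j * s j = pmVec n (mask δ) j := by
    intro δ j
    have h := hmask (mask δ) j
    rw [hinv] at h
    rw [h, mul_assoc]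
    rcases hs j with h' | h' <;> rw [h'] <;> ring
  have hstep : (∑ ε ∈ Finset.univ.filter
        (fun ε : Fin n → Bool => 0 ≤ ∑ i, pmVec n ε i * s i), pmVec n ε)
      = ∑ δ ∈ Finset.univ.filter (fun δ : Fin n → Bool => 0 ≤ ∑ j, pmVec n δ j),
          (fun j => pmVec n δ j * s j) := by
    refine Finset.sum_nbij' mask mask ?_ ?_ ?_ ?_ ?_
    · intro ε hε
      simp only [mem_filter, mem_univ, true_and] at hε ⊢
      calc (0:ℝ) ≤ ∑ i, pmVec n ε i * s i := hε
        _ = ∑ j, pmVec n (mask ε) j := Finset.sum_congr rfl fun j _ => hmask2 ε j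
    · intro δ hδ
      simp only [mem_filter, mem_univ, true_and] at hδ ⊢
      calc (0:ℝ) ≤ ∑ j, pmVec n δ j := hδ
        _ = ∑ i, pmVec n (mask δ) i * s i := by
            refine Finset.sum_congr rfl fun j _ => ?_
            rw [hmask2 (mask δ) j, hinv]
    · intro ε _; exact hinv ε
    · intro δ _; exact hinv δ
    · intro ε _
      funext j
      show pmVec n ε j = pmVec n (mask ε) j * s j
      have h := hmask2 (mask ε) j
      rw [hinv] at h
      exact h.symm
  rw [hstep]
  funext i
  rw [Finset.sum_apply, Pi.smul_apply, smul_eq_mul]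
  rw [← Finset.sum_mul, key n hn hne i]
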